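/- Let R be a commutative ring, σ and τ finite types, and n ≥ 0. Then in MvPolynomial (σ ⊕ τ) R one has ∑_{λ ⊢ n} (rename Sum.inl (h_λ)) · (rename Sum.inr (m_λ)) = ∑_{λ ⊢ n} (rename Sum.inl (m_λ)) · (rename Sum.inr (h_λ)), the sums running over all partitions λ of n, where h_λ = ∏_k h_{λ_k} and m_λ denotes the monomial symmetric polynomial, in the σ-variables and τ-variables respectively as indicated. (This expresses the symmetry in X and Y of the reproducing kernel pExp[XY], i.e. that {h_λ} and {m_λ} are dual bases for the Hall pairing.) -/

import Mathlib

open MvPolynomial Finset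
set_option maxHeartbeats 1000000

section Aux

variable {S : Type*} [CommSemiring S]

/-- coefficient of a product of power series as a sum over `Sym`. -/
lemma coeffProdSym {ι : Type*} [Fintype ι] [DecidableEq ι] (g : ι → ℕ → S) (n : ℕ) :
    (PowerSeries.coeff (R := S) n) (∏ j : ι, PowerSeries.mk (g j)) =
      ∑ s : Sym ι n, ∏ j : ι, g j (Multiset.count j s.1) := by
  rw [PowerSeries.coeff_prod]
  simp only [PowerSeries.coeff_mk]
  have hcount : ∀ (m : Multiset ι), ∑ j : ι, Multiset.count j m = Multiset.card m := by
    intro m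
    rw [← Multiset.toFinset_sum_count_eq]
    exact (Finset.sum_subset (Finset.subset_univ _) (fun x _ hx =>
      Multiset.count_eq_zero_of_notMem (by simpa using hx))).symm
  refine (Finset.sum_bij' (fun (s : Sym ι n) (_ : s ∈ Finset.univ) => s.1.toFinsupp)
    (fun l (hl : l ∈ Finset.finsuppAntidiag Finset.univ n) =>
      (⟨l.toMultiset, ?_⟩ : Sym ι n)) ?_ ?_ ?_ ?_ ?_).symm
  · rw [Finset.mem_finsuppAntidiag] at hl
    rw [Finsupp.card_toMultiset, Finsupp.sum_fintype _ _ (fun _ => rfl), ← hl.1]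
    rfl
  · intro s _
    rw [Finset.mem_finsuppAntidiag]
    refine ⟨?_, Finset.subset_univ _⟩
    rw [Finset.sum_congr rfl (fun j _ => Multiset.toFinsupp_apply s.1 j), hcount, s.2]
  · intro l hl
    exact Finset.mem_univ _
  · intro s _
    exact Subtype.ext (Multiset.toFinsupp_toMultiset s.1)
  · intro l hl
    exact Finsupp.toMultiset_toFinsupp l
  · intro s _
    exact Finset.prod_congr rfl fun j _ => by rw [Multiset.toFinsupp_apply]

lemma starA {ι : Type*} [Fintype ι] [DecidableEq ι] (f : ι → S) (n : ℕ) :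
    (PowerSeries.coeff (R := S) n) (∏ i : ι, PowerSeries.mk (f i ^ ·)) =
      ∑ w : Sym ι n, (w.1.map f).prod := by
  rw [coeffProdSym]
  refine Finset.sum_congr rfl fun w _ => ?_
  rw [Finset.prod_multiset_map_count]
  exact (Finset.prod_subset (Finset.subset_univ _) (by
    intro x _ hx
    rw [Multiset.mem_toFinset] at hx
    rw [Multiset.count_eq_zero_of_notMem hx, pow_zero])).symm

lemma symKey {ι κ : Type*} [Fintype ι] [Fintype κ] [DecidableEq ι] [DecidableEq κ]
    (f : ι × κ → S) (n : ℕ) :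
    ∑ s : Sym κ n, ∏ j : κ,
        (∑ u : Sym ι (Multiset.count j s.1), (u.1.map (fun i => f (i, j))).prod) =
      ∑ w : Sym (ι × κ) n, (w.1.map f).prod := by
  have h1 : ∀ j : κ, PowerSeries.mk (fun m => ∑ u : Sym ι m, (u.1.map (fun i => f (i, j))).prod)
      = ∏ i : ι, PowerSeries.mk (f (i, j) ^ ·) := by
    intro j
    ext m
    rw [PowerSeries.coeff_mk, starA]
  calc ∑ s : Sym κ n, ∏ j : κ,
        (∑ u : Sym ι (Multiset.count j s.1), (u.1.map (fun i => f (i, j))).prod)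
      = (PowerSeries.coeff (R := S) n) (∏ j : κ,
          PowerSeries.mk (fun m => ∑ u : Sym ι m, (u.1.map (fun i => f (i, j))).prod)) := by
        rw [coeffProdSym]
    _ = (PowerSeries.coeff (R := S) n) (∏ p : ι × κ, PowerSeries.mk (f p ^ ·)) := by
        simp_rw [h1]
        rw [Fintype.prod_prod_type, Finset.prod_comm]
    _ = _ := starA f n
end Aux

lemma sideGen {ι κ S : Type*} [Fintype ι] [Fintype κ] [DecidableEq ι] [DecidableEq κ]
    [CommSemiring S] (x : ι → S) (y : κ → S) (n : ℕ) :
    ∑ μ : n.Partition,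
        (μ.parts.map (fun m => ∑ u : Sym ι m, (u.1.map x).prod)).prod *
          (∑ s : {a : Sym κ n // Nat.Partition.ofSym a = μ}, (s.1.1.map y).prod) =
      ∑ w : Sym (ι × κ) n, (w.1.map (fun p => x p.1 * y p.2)).prod := by
  set H : ℕ → S := fun m => ∑ u : Sym ι m, (u.1.map x).prod with hH
  set T : κ → ℕ → S := fun j m => ∑ u : Sym ι m, (u.1.map (fun i => x i * y j)).prod with hT
  have hH0 : H 0 = 1 := by
    show ∑ u : Sym ι 0, (Multiset.map x ↑u).prod = 1
    rw [Fintype.sum_unique]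
    show (Multiset.map x ↑(Sym.nil : Sym ι 0)).prod = 1
    simp
  have hPQ : ∀ s : Sym κ n,
      ((Nat.Partition.ofSym s).parts.map H).prod * (s.1.map y).prod
        = ∏ j : κ, T j (Multiset.count j s.1) := by
    intro s
    have h1 : ((Nat.Partition.ofSym s).parts.map H).prod
        = ∏ j : κ, H (Multiset.count j s.1) := by
      show ((s.1.dedup.map s.1.count).map H).prod = _
      rw [Multiset.map_map]
      have : ((s.1.dedup.map (H ∘ fun a => Multiset.count a s.1))).prod
          = ∏ j ∈ s.1.toFinset, H (Multiset.count j s.1) := by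
        rw [Finset.prod_eq_multiset_prod, Multiset.toFinset_val]
        rfl
      rw [this]
      exact Finset.prod_subset (Finset.subset_univ _) (fun j _ hj => by
        rw [Multiset.count_eq_zero_of_notMem (by simpa using hj), hH0])
    have h2 : (s.1.map y).prod = ∏ j : κ, y j ^ Multiset.count j s.1 := by
      rw [Finset.prod_multiset_map_count]
      exact Finset.prod_subset (Finset.subset_univ _) (fun j _ hj => by
        rw [Multiset.count_eq_zero_of_notMem (by simpa using hj), pow_zero])
    have h3 : ∀ (j : κ) (m : ℕ), H m * y j ^ m = T j m := by
      intro j m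
      rw [hH, hT, Finset.sum_mul]
      refine Finset.sum_congr rfl fun u _ => ?_
      rw [Multiset.prod_map_mul]
      congr 1
      rw [Multiset.map_const', Multiset.prod_replicate]
      congr 1
      exact u.2.symm
    rw [h1, h2, ← Finset.prod_mul_distrib]
    exact Finset.prod_congr rfl fun j _ => h3 j _
  calc ∑ μ : n.Partition,
        (μ.parts.map H).prod *
          (∑ s : {a : Sym κ n // Nat.Partition.ofSym a = μ}, (s.1.1.map y).prod)
      = ∑ μ : n.Partition, ∑ s : {a : Sym κ n // Nat.Partition.ofSym a = μ},
          ((Nat.Partition.ofSym s.1).parts.map H).prod * (s.1.1.map y).prod := by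
        refine Finset.sum_congr rfl fun μ _ => ?_
        rw [Finset.mul_sum]
        exact Finset.sum_congr rfl fun s _ => by rw [s.2]
    _ = ∑ μ : n.Partition, ∑ s ∈ Finset.univ.filter (fun a => Nat.Partition.ofSym a = μ),
          ((Nat.Partition.ofSym s).parts.map H).prod * (s.1.map y).prod := by
        refine Finset.sum_congr rfl fun μ _ => ?_
        refine (Finset.sum_subtype
          (Finset.univ.filter (fun a => Nat.Partition.ofSym a = μ)) (fun a => ?_)
          (fun s => ((Nat.Partition.ofSym s).parts.map H).prod * (s.1.map y).prod)).symm
        simp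
    _ = ∑ s : Sym κ n, ((Nat.Partition.ofSym s).parts.map H).prod * (s.1.map y).prod := by
        exact Finset.sum_fiberwise_of_maps_to (fun a _ => Finset.mem_univ _) _
    _ = ∑ s : Sym κ n, ∏ j : κ, T j (Multiset.count j s.1) := by
        exact Finset.sum_congr rfl fun s _ => hPQ s
    _ = ∑ w : Sym (ι × κ) n, (w.1.map (fun p => x p.1 * y p.2)).prod := by
        rw [← symKey (fun p => x p.1 * y p.2) n]




lemma renameKeyH {R : Type*} [CommRing R] {υ α : Type*} [Fintype α] [DecidableEq α]
    {n : ℕ} (e : α → υ) (μ : n.Partition) :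
    rename e (hsymmPart α R μ) =
      (μ.parts.map (fun m => ∑ u : Sym α m,
        (u.1.map (fun i => (X (e i) : MvPolynomial υ R))).prod)).prod := by
  unfold hsymmPart
  rw [map_multiset_prod, Multiset.map_map]
  congr 1
  refine Multiset.map_congr rfl fun m _ => ?_
  show rename e (hsymm α R m) = _
  unfold hsymm
  rw [map_sum]
  refine Finset.sum_congr rfl fun u _ => ?_
  rw [map_multiset_prod, Multiset.map_map]
  refine congrArg _ (Multiset.map_congr rfl fun i _ => ?_)
  simp

lemma renameKeyM {R : Type*} [CommRing R] {υ α : Type*} [Fintype α] [DecidableEq α]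
    {n : ℕ} (e : α → υ) (μ : n.Partition) :
    rename e (msymm α R μ) =
      ∑ s : {a : Sym α n // Nat.Partition.ofSym a = μ},
        (s.1.1.map (fun i => (X (e i) : MvPolynomial υ R))).prod := by
  unfold msymm
  rw [map_sum]
  refine Finset.sum_congr rfl fun u _ => ?_
  rw [map_multiset_prod, Multiset.map_map]
  refine congrArg _ (Multiset.map_congr rfl fun i _ => ?_)
  simp

/-- Symmetry of the reproducing kernel `pExp[XY]` for the Hall pairing, i.e. `{h_λ}` and
`{m_λ}` are dual bases: `∑_{λ⊢n} h_λ[X] m_λ[Y] = ∑_{λ⊢n} m_λ[X] h_λ[Y]`. -/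
theorem hsymm_msymm_kernel_symm (R : Type*) [CommRing R] (σ τ : Type*) [Fintype σ] [Fintype τ]
    [DecidableEq σ] [DecidableEq τ] (n : ℕ) :
    ∑ μ : n.Partition,
        (rename Sum.inl (hsymmPart σ R μ) * rename Sum.inr (msymm τ R μ) :
          MvPolynomial (σ ⊕ τ) R) =
      ∑ μ : n.Partition,
        rename Sum.inl (msymm σ R μ) * rename Sum.inr (hsymmPart τ R μ) := by
  calc ∑ μ : n.Partition,
        (rename Sum.inl (hsymmPart σ R μ) * rename Sum.inr (msymm τ R μ) :
          MvPolynomial (σ ⊕ τ) R)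
      = ∑ w : Sym (σ × τ) n,
          (w.1.map (fun p => (X (Sum.inl p.1) * X (Sum.inr p.2) :
            MvPolynomial (σ ⊕ τ) R))).prod := by
        rw [← sideGen (fun i => (X (Sum.inl i) : MvPolynomial (σ ⊕ τ) R))
          (fun j => (X (Sum.inr j) : MvPolynomial (σ ⊕ τ) R)) n]
        exact Finset.sum_congr rfl fun μ _ => by rw [renameKeyH Sum.inl μ, renameKeyM Sum.inr μ]
    _ = ∑ w : Sym (τ × σ) n,
          (w.1.map (fun p => (X (Sum.inr p.1) * X (Sum.inl p.2) :
            MvPolynomial (σ ⊕ τ) R))).prod := by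
        apply Fintype.sum_equiv (Sym.equivCongr (Equiv.prodComm σ τ))
        intro w
        rw [show ((Sym.equivCongr (Equiv.prodComm σ τ)) w).1
            = w.1.map (Equiv.prodComm σ τ) from rfl, Multiset.map_map]
        exact congrArg _ (Multiset.map_congr rfl fun p _ => (mul_comm _ _))
    _ = ∑ μ : n.Partition,
        rename Sum.inl (msymm σ R μ) * rename Sum.inr (hsymmPart τ R μ) := by
        rw [← sideGen (fun j => (X (Sum.inr j) : MvPolynomial (σ ⊕ τ) R))
          (fun i => (X (Sum.inl i) : MvPolynomial (σ ⊕ τ) R)) n]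
        exact (Finset.sum_congr rfl fun μ _ => by
          rw [renameKeyH Sum.inr μ, renameKeyM Sum.inl μ, mul_comm]).symm
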